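/- Let G be a countable, 2-connected, locally finite graph and U ⊆ V(G) infinite. Then G has a ray containing an infinite subset of U. -/

import Mathlib

/-- A ray in `G`: a one-way infinite path, given by an injective sequence of
successively adjacent vertices. -/
def IsRay {α : Type*} (G : SimpleGraph α) (r : ℕ → α) : Prop :=
  Function.Injective r ∧ ∀ n, G.Adj (r n) (r (n + 1))

/-- The set of vertices of a walk. -/
def walkVerts {α : Type*} {G : SimpleGraph α} {a b : α} (p : G.Walk a b) : Set α :=
  {x | x ∈ p.support}

/-- `G` is 2-connected: connected, with at least 3 vertices, and still connected
after deleting any single vertex. -/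
def TwoConnected {α : Type*} (G : SimpleGraph α) : Prop :=
  G.Connected ∧ (∃ a b c : α, a ≠ b ∧ a ≠ c ∧ b ≠ c) ∧
    ∀ v : α, (G.induce {u | u ≠ v}).Connected

set_option linter.unusedSectionVars false
set_option linter.unusedVariables false
set_option maxHeartbeats 1000000

open SimpleGraph Walk

variable {α : Type} [DecidableEq α] {G : SimpleGraph α}

namespace RayProof


/-- Take until first vertex in a set `T` (end assumed in `T`). -/
lemma exists_prefix_set {a b : α} (p : G.Walk a b) (T : Set α) (hb : b ∈ T) :
    ∃ (b' : α) (q : G.Walk a b'), b' ∈ T ∧ (∀ v ∈ q.support, v ∈ T → v = b') ∧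
      (∀ v ∈ q.support, v ∈ p.support) ∧ (p.IsPath → q.IsPath) ∧ q.length ≤ p.length := by
  induction p with
  | nil => exact ⟨_, Walk.nil, hb, by simp, by simp, fun h => h, le_rfl⟩
  | @cons u v w h p ih =>
    by_cases hu : u ∈ T
    · exact ⟨u, Walk.nil, hu, by simp, by simp, fun _ => Walk.IsPath.nil, by simp⟩
    · obtain ⟨b', q, hb', honce, hsub, hq, hlen⟩ := ih hb
      refine ⟨b', Walk.cons h q, hb', ?_, ?_, ?_, by simpa using hlen⟩
      · intro z hz hzT
        rw [Walk.support_cons] at hz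
        rcases List.mem_cons.mp hz with rfl | hz'
        · exact absurd hzT hu
        · exact honce z hz' hzT
      · intro z hz
        rw [Walk.support_cons] at hz
        rw [Walk.support_cons]
        rcases List.mem_cons.mp hz with rfl | hz'
        · exact List.mem_cons_self
        · exact List.mem_cons_of_mem _ (hsub z hz')
      · intro hp
        rw [Walk.cons_isPath_iff] at hp ⊢
        exact ⟨hq hp.1, fun hc => hp.2 (hsub u hc)⟩

/-- Trim a walk from `S` to `T` into a path meeting `S` only at its start and
`T` only at its end. -/
lemma exists_trimmed_path {a b : α} (w : G.Walk a b) (S T : Set α)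
    (ha : a ∈ S) (hb : b ∈ T) :
    ∃ (a' b' : α) (p : G.Walk a' b'), p.IsPath ∧ a' ∈ S ∧ b' ∈ T ∧
      (∀ v ∈ p.support, v ∈ S → v = a') ∧ (∀ v ∈ p.support, v ∈ T → v = b') ∧
      (∀ v ∈ p.support, v ∈ w.support) := by
  obtain ⟨b', q, hb', honceT, hsub, hq, -⟩ := exists_prefix_set w.bypass T hb
  have hqp : q.IsPath := hq w.bypass_isPath
  obtain ⟨a', r, ha', honceS, hsub', hr, -⟩ := exists_prefix_set q.reverse S (by simpa using ha)
  refine ⟨a', b', r.reverse, (hr hqp.reverse).reverse, ha', hb', ?_, ?_, ?_⟩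
  · intro v hv hvS
    exact honceS v (by simpa using hv) hvS
  · intro v hv hvT
    have hvq : v ∈ q.support := by
      have := hsub' v (by simpa using hv); simpa using this
    exact honceT v hvq hvT
  · intro v hv
    have hvq : v ∈ q.support := by
      have := hsub' v (by simpa using hv); simpa using this
    exact Walk.support_bypass_subset w (hsub v hvq)

/-- In a path `p : a → b`, if `v ≠ b` then `b` is not in the prefix `takeUntil v`. -/
lemma end_not_mem_takeUntil {a b v : α} {p : G.Walk a b} (hp : p.IsPath)
    (hv : v ∈ p.support) (hne : v ≠ b) : b ∉ (p.takeUntil v hv).support := by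
  intro hbmem
  have hnodup : p.support.Nodup := hp.support_nodup
  have hsupp : p.support = (p.takeUntil v hv).support ++ (p.dropUntil v hv).support.tail := by
    rw [← Walk.support_append, p.take_spec hv]
  rw [hsupp] at hnodup
  have hdisj := (List.nodup_append.mp hnodup).2.2
  have hbtail : b ∈ (p.dropUntil v hv).support.tail := by
    have hcons : (p.dropUntil v hv).support = v :: (p.dropUntil v hv).support.tail :=
      Walk.support_eq_cons (p.dropUntil v hv)
    have hbmem' : b ∈ (p.dropUntil v hv).support := Walk.end_mem_support _
    rw [hcons] at hbmem'
    rcases List.mem_cons.mp hbmem' with h | h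
    · exact (hne h.symm).elim
    · exact h
  exact hdisj b hbmem b hbtail rfl

/-- In a path `p : a → b`, if `v ≠ a` then `a` is not in the suffix `dropUntil v`. -/
lemma start_not_mem_dropUntil {a b v : α} {p : G.Walk a b} (hp : p.IsPath)
    (hv : v ∈ p.support) (hne : v ≠ a) : a ∉ (p.dropUntil v hv).support := by
  intro hamem
  have hnodup : p.support.Nodup := hp.support_nodup
  have hsupp : p.support = (p.takeUntil v hv).support ++ (p.dropUntil v hv).support.tail := by
    rw [← Walk.support_append, p.take_spec hv]
  rw [hsupp] at hnodup
  have hdisj := (List.nodup_append.mp hnodup).2.2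
  have hatake : a ∈ (p.takeUntil v hv).support := Walk.start_mem_support _
  have hcons : (p.dropUntil v hv).support = v :: (p.dropUntil v hv).support.tail :=
    Walk.support_eq_cons (p.dropUntil v hv)
  rw [hcons] at hamem
  rcases List.mem_cons.mp hamem with h | h
  · exact hne h.symm
  · exact hdisj a hatake a h rfl

/-- Gluing two paths that meet only in the junction vertex. -/
lemma isPath_append {a b c : α} {p : G.Walk a b} {q : G.Walk b c}
    (hp : p.IsPath) (hq : q.IsPath)
    (hmeet : ∀ z, z ∈ p.support → z ∈ q.support → z = b) : (p.append q).IsPath := by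
  rw [Walk.isPath_def, Walk.support_append, List.nodup_append]
  refine ⟨hp.support_nodup, ?_, ?_⟩
  · have := hq.support_nodup
    rw [Walk.support_eq_cons q] at this
    exact this.of_cons
  · intro z hzp z' hzq hzz
    subst hzz
    have hz : z ∈ q.support := List.mem_of_mem_tail hzq
    have hzb : z = b := hmeet z hzp hz
    subst hzb
    have := hq.support_nodup
    rw [Walk.support_eq_cons q] at this
    exact (List.nodup_cons.mp this).1 hzq

/-- Every vertex of a walk is the start or belongs to an edge of the walk. -/
lemma mem_start_or_mem_edge {a b z : α} (p : G.Walk a b) (hz : z ∈ p.support) :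
    z = a ∨ ∃ e ∈ p.edges, z ∈ e := by
  induction p with
  | nil => left; simpa using hz
  | @cons u v w h p ih =>
    rw [Walk.support_cons] at hz
    rcases List.mem_cons.mp hz with rfl | hz'
    · exact Or.inl rfl
    · rcases ih hz' with rfl | ⟨e, he, hze⟩
      · exact Or.inr ⟨s(u, z), by simp, by simp⟩
      · exact Or.inr ⟨e, by simp [he], hze⟩



def IsCutSet (H : SimpleGraph α) (S T : Set α) (c : α) : Prop :=
  ∀ ⦃a b : α⦄ (w : H.Walk a b), a ∈ S → b ∈ T → c ∈ w.support

/-- Source-side extraction lemma: from any `S`–`T` walk in `H`, we can extract a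
walk in `H' = H − xy` from `S` to `{c, x}`, inside its support.  Here `c` is a
cut vertex for `S`–`T` walks of `H'` and `y ∈ T`. -/
lemma extract_source {H : SimpleGraph α} {S T : Set α} {x y c : α} (hxy : x ≠ y)
    (hc : IsCutSet (H.deleteEdges {s(x,y)}) S T c) (hyT : y ∈ T) :
    ∀ (n : ℕ) {a b : α} (w : H.Walk a b), w.length ≤ n → a ∈ S → b ∈ T →
      ∃ (a' d : α) (q : (H.deleteEdges {s(x,y)}).Walk a' d), a' ∈ S ∧ (d = c ∨ d = x) ∧
        ∀ v ∈ q.support, v ∈ w.support := by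
  intro n
  induction n using Nat.strong_induction_on with
  | _ n ih =>
    intro a b w hlen ha hb
    by_cases he : s(x,y) ∈ w.edges
    · have hx : x ∈ w.support := w.fst_mem_support_of_mem_edges he
      set p := w.takeUntil x hx with hp
      by_cases hep : s(x,y) ∈ p.edges
      · have hyp : y ∈ p.support := p.snd_mem_support_of_mem_edges hep
        set p2 := p.takeUntil y hyp with hp2
        have hlt : p2.length < n := by
          have h1 := congr_arg Walk.length (p.take_spec hyp)
          rw [Walk.length_append, ← hp2] at h1
          have h2 : (p.dropUntil y hyp).length ≠ 0 := by
            intro h0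
            exact hxy ((p.dropUntil y hyp).eq_of_length_eq_zero h0).symm
          have h3 : p.length ≤ w.length := w.length_takeUntil_le hx
          omega
        obtain ⟨a', d, q, ha', hd, hsub⟩ :=
          ih p2.length hlt p2 le_rfl ha hyT
        exact ⟨a', d, q, ha', hd, fun v hv =>
          (w.support_takeUntil_subset hx) ((p.support_takeUntil_subset hyp) (hsub v hv))⟩
      · refine ⟨a, x, p.transfer _ ?_, ha, Or.inr rfl, ?_⟩
        · intro e' he'
          rw [SimpleGraph.edgeSet_deleteEdges]
          refine ⟨p.edges_subset_edgeSet he', ?_⟩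
          simp only [Set.mem_singleton_iff]
          rintro rfl
          exact hep he'
        · intro v hv
          rw [Walk.support_transfer] at hv
          exact w.support_takeUntil_subset hx hv
    · have hw' : ∀ e' ∈ w.edges, e' ∈ (H.deleteEdges {s(x,y)}).edgeSet := by
        intro e' he'
        rw [SimpleGraph.edgeSet_deleteEdges]
        refine ⟨w.edges_subset_edgeSet he', ?_⟩
        simp only [Set.mem_singleton_iff]
        rintro rfl
        exact he he'
      set w' := w.transfer _ hw' with hw'def
      have hcmem : c ∈ w'.support := hc w' ha hb
      refine ⟨a, c, w'.takeUntil c hcmem, ha, Or.inl rfl, ?_⟩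
      intro v hv
      have := w'.support_takeUntil_subset hcmem hv
      rwa [Walk.support_transfer] at this

/-- Target-side extraction lemma: extract a walk in `H' = H − xy` from `{c, y}`
to `T`, inside the support. -/
lemma extract_target {H : SimpleGraph α} {S T : Set α} {x y c : α} (hxy : x ≠ y)
    (hc : IsCutSet (H.deleteEdges {s(x,y)}) S T c) (hyT : y ∈ T) :
    ∀ (n : ℕ) {a b : α} (w : H.Walk a b), w.length ≤ n → a ∈ S → b ∈ T →
      ∃ (d b' : α) (q : (H.deleteEdges {s(x,y)}).Walk d b'), b' ∈ T ∧ (d = c ∨ d = y) ∧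
        ∀ v ∈ q.support, v ∈ w.support := by
  intro n
  induction n using Nat.strong_induction_on with
  | _ n ih =>
    intro a b w hlen ha hb
    by_cases he : s(x,y) ∈ w.edges
    · have hy : y ∈ w.reverse.support := by
        rw [Walk.support_reverse, List.mem_reverse]
        exact w.snd_mem_support_of_mem_edges he
      set p' := w.reverse.takeUntil y hy with hp'
      by_cases hep : s(x,y) ∈ p'.edges
      · -- recurse on the prefix of w before its last y
        set pre := (w.reverse.dropUntil y hy).reverse with hpre
        have hlt : pre.length < n := by
          have h1 := congr_arg Walk.length (w.reverse.take_spec hy)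
          rw [Walk.length_append] at h1
          rw [← hp'] at h1
          have h1' : p'.length + (w.reverse.dropUntil y hy).length = w.length := by
            rw [h1]; exact Walk.length_reverse _
          have h2 : p'.length ≠ 0 := by
            intro h0
            have he' : p'.edges.length = 0 := by
              rw [Walk.length_edges, h0]
            rw [List.length_eq_zero_iff] at he'
            simp [he'] at hep
          have h3 : pre.length = (w.reverse.dropUntil y hy).length := Walk.length_reverse _
          omega
        obtain ⟨d, b', q, hb', hd, hsub⟩ := ih pre.length hlt pre le_rfl ha hyT
        refine ⟨d, b', q, hb', hd, fun v hv => ?_⟩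
        have := hsub v hv
        rw [hpre, Walk.support_reverse, List.mem_reverse] at this
        have := w.reverse.support_dropUntil_subset hy this
        rw [Walk.support_reverse, List.mem_reverse] at this
        exact this
      · refine ⟨y, b, (p'.transfer _ ?_).reverse, hb, Or.inr rfl, ?_⟩
        · intro e' he'
          rw [SimpleGraph.edgeSet_deleteEdges]
          refine ⟨p'.edges_subset_edgeSet he', ?_⟩
          simp only [Set.mem_singleton_iff]
          rintro rfl
          exact hep he'
        · intro v hv
          rw [Walk.support_reverse, List.mem_reverse, Walk.support_transfer] at hv
          have := w.reverse.support_takeUntil_subset hy hv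
          rwa [Walk.support_reverse, List.mem_reverse] at this
    · have hw' : ∀ e' ∈ w.edges, e' ∈ (H.deleteEdges {s(x,y)}).edgeSet := by
        intro e' he'
        rw [SimpleGraph.edgeSet_deleteEdges]
        refine ⟨w.edges_subset_edgeSet he', ?_⟩
        simp only [Set.mem_singleton_iff]
        rintro rfl
        exact he he'
      set w' := w.transfer _ hw' with hw'def
      have hcmem : c ∈ w'.support := hc w' ha hb
      refine ⟨c, b, w'.dropUntil c hcmem, hb, Or.inl rfl, ?_⟩
      intro v hv
      have := w'.support_dropUntil_subset hcmem hv
      rwa [Walk.support_transfer] at this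




def TwoFan (H : SimpleGraph α) (S T : Set α) : Prop :=
  ∃ (a₁ b₁ a₂ b₂ : α) (p : H.Walk a₁ b₁) (q : H.Walk a₂ b₂),
    p.IsPath ∧ q.IsPath ∧ a₁ ∈ S ∧ a₂ ∈ S ∧ b₁ ∈ T ∧ b₂ ∈ T ∧
    (∀ v ∈ p.support, v ∈ S → v = a₁) ∧ (∀ v ∈ q.support, v ∈ S → v = a₂) ∧
    (∀ v ∈ p.support, v ∈ T → v = b₁) ∧ (∀ v ∈ q.support, v ∈ T → v = b₂) ∧
    (∀ v ∈ p.support, v ∉ q.support)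

lemma TwoFan.mono {H H' : SimpleGraph α} {S T : Set α} (hle : H' ≤ H) :
    TwoFan H' S T → TwoFan H S T := by
  rintro ⟨a₁, b₁, a₂, b₂, p, q, hp, hq, h1, h2, h3, h4, h5, h6, h7, h8, h9⟩
  have hed : ∀ {u v : α} (r : H'.Walk u v), ∀ e ∈ r.edges, e ∈ H.edgeSet :=
    fun r e he => SimpleGraph.edgeSet_mono hle (r.edges_subset_edgeSet he)
  refine ⟨a₁, b₁, a₂, b₂, p.transfer H (hed p), q.transfer H (hed q), ?_, ?_, h1, h2, h3, h4,
    ?_, ?_, ?_, ?_, ?_⟩ <;>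
    simp only [Walk.isPath_def, Walk.support_transfer] <;>
    first
      | exact hp.support_nodup
      | exact hq.support_nodup
      | assumption

/-- orient a two-fan onto a two-element target set -/
lemma TwoFan.orientT {H : SimpleGraph α} {S : Set α} {c x : α} (hne : c ≠ x)
    (h : TwoFan H S {c, x}) :
    ∃ (s₁ s₂ : α) (p₁ : H.Walk s₁ c) (p₂ : H.Walk s₂ x),
      p₁.IsPath ∧ p₂.IsPath ∧ s₁ ∈ S ∧ s₂ ∈ S ∧
      (∀ v ∈ p₁.support, v ∈ S → v = s₁) ∧ (∀ v ∈ p₂.support, v ∈ S → v = s₂) ∧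
      (∀ v ∈ p₁.support, v = c ∨ v = x → v = c) ∧
      (∀ v ∈ p₂.support, v = c ∨ v = x → v = x) ∧
      (∀ v ∈ p₁.support, v ∉ p₂.support) := by
  obtain ⟨a₁, b₁, a₂, b₂, p, q, hp, hq, h1, h2, h3, h4, h5, h6, h7, h8, h9⟩ := h
  have hb12 : b₁ ≠ b₂ := by
    rintro rfl
    exact h9 b₁ p.end_mem_support q.end_mem_support
  have hmem : ∀ {z : α}, z ∈ ({c, x} : Set α) → z = c ∨ z = x := by
    intro z hz; simpa using hz
  have h9' : ∀ v ∈ q.support, v ∉ p.support := fun v hv hvp => h9 v hvp hv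
  rcases hmem h3 with rfl | rfl
  · rcases hmem h4 with h4' | rfl
    · exact absurd h4' hb12.symm
    · exact ⟨a₁, a₂, p, q, hp, hq, h1, h2, h5, h6,
        fun v hv hvcx => h7 v hv (by simpa using hvcx),
        fun v hv hvcx => h8 v hv (by simpa using hvcx), h9⟩
  · rcases hmem h4 with rfl | h4'
    · exact ⟨a₂, a₁, q, p, hq, hp, h2, h1, h6, h5,
        fun v hv hvcx => h8 v hv (by simpa using hvcx),
        fun v hv hvcx => h7 v hv (by simpa using hvcx), h9'⟩
    · exact absurd h4' hb12.symm

/-- orient a two-fan from a two-element source set -/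
lemma TwoFan.orientS {H : SimpleGraph α} {T : Set α} {c y : α} (hne : c ≠ y)
    (h : TwoFan H {c, y} T) :
    ∃ (u₁ u₂ : α) (q₁ : H.Walk c u₁) (q₂ : H.Walk y u₂),
      q₁.IsPath ∧ q₂.IsPath ∧ u₁ ∈ T ∧ u₂ ∈ T ∧
      (∀ v ∈ q₁.support, v ∈ T → v = u₁) ∧ (∀ v ∈ q₂.support, v ∈ T → v = u₂) ∧
      (∀ v ∈ q₁.support, v = c ∨ v = y → v = c) ∧
      (∀ v ∈ q₂.support, v = c ∨ v = y → v = y) ∧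
      (∀ v ∈ q₁.support, v ∉ q₂.support) := by
  obtain ⟨a₁, b₁, a₂, b₂, p, q, hp, hq, h1, h2, h3, h4, h5, h6, h7, h8, h9⟩ := h
  have ha12 : a₁ ≠ a₂ := by
    rintro rfl
    exact h9 a₁ p.start_mem_support q.start_mem_support
  have hmem : ∀ {z : α}, z ∈ ({c, y} : Set α) → z = c ∨ z = y := by
    intro z hz; simpa using hz
  have h9' : ∀ v ∈ q.support, v ∉ p.support := fun v hv hvp => h9 v hvp hv
  rcases hmem h1 with rfl | rfl
  · rcases hmem h2 with h2' | rfl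
    · exact absurd h2' ha12.symm
    · exact ⟨b₁, b₂, p, q, hp, hq, h3, h4, h7, h8,
        fun v hv hvcy => h5 v hv (by simpa using hvcy),
        fun v hv hvcy => h6 v hv (by simpa using hvcy), h9⟩
  · rcases hmem h2 with rfl | h2'
    · exact ⟨b₂, b₁, q, p, hq, hp, h4, h3, h8, h7,
        fun v hv hvcy => h6 v hv (by simpa using hvcy),
        fun v hv hvcy => h5 v hv (by simpa using hvcy), h9'⟩
    · exact absurd h2' ha12.symm


theorem menger_two [Nonempty α] :
    ∀ (n : ℕ) (H : SimpleGraph α), H.edgeSet.Finite → H.edgeSet.ncard = n →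
    ∀ (S T : Set α),
      (∀ c : α, ∃ (a b : α) (w : H.Walk a b), a ∈ S ∧ b ∈ T ∧ c ∉ w.support) →
    TwoFan H S T := by
  intro n
  induction n using Nat.strong_induction_on with
  | _ n IH =>
    intro H hfin hn S T hcut
    by_cases hST : (S ∩ T).Nonempty
    · obtain ⟨s, hsS, hsT⟩ := hST
      obtain ⟨a, b, w, ha, hb, hnc⟩ := hcut s
      obtain ⟨a', b', p, hp, ha', hb', hSonce, hTonce, hsub⟩ :=
        exists_trimmed_path w S T ha hb
      have hsp : s ∉ p.support := fun h => hnc (hsub s h)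
      refine ⟨a', b', s, s, p, Walk.nil, hp, Walk.IsPath.nil, ha', hsS, hb', hsT,
        hSonce, ?_, hTonce, ?_, ?_⟩
      · intro v hv _; simpa using (by simpa using hv : v = s)
      · intro v hv _; simpa using (by simpa using hv : v = s)
      · intro v hv hvq
        have : v = s := by simpa using hvq
        subst this
        exact hsp hv
    · -- S ∩ T = ∅
      obtain ⟨a0, b0, w0, ha0, hb0, -⟩ := hcut (Classical.arbitrary α)
      obtain ⟨a1, y, P, hP, ha1, hyT, hPS, hPT, -⟩ :=
        exists_trimmed_path w0 S T ha0 hb0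
      have ha1y : y ≠ a1 := by
        rintro rfl
        exact hST ⟨y, ha1, hyT⟩
      obtain ⟨x, hadj, P', hPrev⟩ := Walk.exists_eq_cons_of_ne ha1y P.reverse
      -- hadj : H.Adj y x
      have hxy : x ≠ y := hadj.ne'
      have hxP : x ∈ P.support := by
        have : x ∈ P.reverse.support := by
          rw [hPrev, Walk.support_cons]
          exact List.mem_cons_of_mem _ P'.start_mem_support
        rwa [Walk.support_reverse, List.mem_reverse] at this
      have hxT : x ∉ T := fun hxT' => hxy (hPT x hxP hxT')
      have hexy : s(x, y) ∈ H.edgeSet := by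
        rw [SimpleGraph.mem_edgeSet]
        exact hadj.symm
      set H' := H.deleteEdges {s(x,y)} with hH'
      have hE' : H'.edgeSet = H.edgeSet \ {s(x,y)} := SimpleGraph.edgeSet_deleteEdges _
      have hfin' : H'.edgeSet.Finite := by rw [hE']; exact hfin.diff
      have hm : H'.edgeSet.ncard < n := by
        rw [hE', ← hn]
        exact Set.ncard_diff_singleton_lt_of_mem hexy hfin
      have hle : H' ≤ H := by
        intro u v huv
        exact (SimpleGraph.deleteEdges_adj.mp huv).1
      by_cases hcut' : ∀ c : α, ∃ (a b : α) (w : H'.Walk a b), a ∈ S ∧ b ∈ T ∧ c ∉ w.support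
      · exact (IH _ hm H' hfin' rfl S T hcut').mono hle
      · push_neg at hcut'
        obtain ⟨c, hc⟩ := hcut'
        have hcutc : IsCutSet H' S T c := fun {a b} w ha hb => hc a b w ha hb
        have hc_or_x : ∀ {a b : α} (w : H.Walk a b), a ∈ S → b ∈ T →
            c ∈ w.support ∨ x ∈ w.support := by
          intro a b w ha hb
          obtain ⟨a', d, q, -, hd, hsub⟩ :=
            extract_source hxy hcutc hyT w.length w le_rfl ha hb
          rcases hd with rfl | rfl
          · exact Or.inl (hsub _ q.end_mem_support)
          · exact Or.inr (hsub _ q.end_mem_support)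
        have hc_or_y : ∀ {a b : α} (w : H.Walk a b), a ∈ S → b ∈ T →
            c ∈ w.support ∨ y ∈ w.support := by
          intro a b w ha hb
          obtain ⟨d, b', q, -, hd, hsub⟩ :=
            extract_target hxy hcutc hyT w.length w le_rfl ha hb
          rcases hd with rfl | rfl
          · exact Or.inl (hsub _ q.start_mem_support)
          · exact Or.inr (hsub _ q.start_mem_support)
        have hxc : c ≠ x := by
          rintro rfl
          obtain ⟨a, b, w, ha, hb, hnc⟩ := hcut c
          rcases hc_or_x w ha hb with h | h <;> exact hnc h
        have hyc : c ≠ y := by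
          rintro rfl
          obtain ⟨a, b, w, ha, hb, hnc⟩ := hcut c
          rcases hc_or_y w ha hb with h | h <;> exact hnc h
        -- IH applications
        have fan₁ : TwoFan H' S {c, x} := by
          refine IH _ hm H' hfin' rfl S {c, x} ?_
          intro c''
          obtain ⟨a, b, w, ha, hb, hnc⟩ := hcut c''
          obtain ⟨a', d, q, ha', hd, hsub⟩ :=
            extract_source hxy hcutc hyT w.length w le_rfl ha hb
          refine ⟨a', d, q, ha', ?_, fun hmem => hnc (hsub _ hmem)⟩
          rcases hd with rfl | rfl <;> simp
        have fan₂ : TwoFan H' {c, y} T := by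
          refine IH _ hm H' hfin' rfl {c, y} T ?_
          intro c''
          obtain ⟨a, b, w, ha, hb, hnc⟩ := hcut c''
          obtain ⟨d, b', q, hb', hd, hsub⟩ :=
            extract_target hxy hcutc hyT w.length w le_rfl ha hb
          refine ⟨d, b', q, ?_, hb', fun hmem => hnc (hsub _ hmem)⟩
          rcases hd with rfl | rfl <;> simp
        obtain ⟨s₁, s₂, p₁, p₂, hp₁, hp₂, hs₁S, hs₂S, hp₁S, hp₂S, hp₁cx, hp₂cx, hpdisj⟩ :=
          fan₁.orientT hxc
        obtain ⟨u₁, u₂, q₁, q₂, hq₁, hq₂, hu₁T, hu₂T, hq₁T, hq₂T, hq₁cy, hq₂cy, hqdisj⟩ :=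
          fan₂.orientS hyc
        -- basic exclusions
        have hcnp₂ : c ∉ p₂.support := fun h => hxc (hp₂cx c h (Or.inl rfl))
        have hcnq₂ : c ∉ q₂.support := fun h => hyc (hq₂cy c h (Or.inl rfl))
        -- cross-disjointness
        have cross : ∀ v, (v ∈ p₁.support → v ∈ q₁.support → v = c) ∧
            (v ∈ p₁.support → v ∈ q₂.support → False) ∧
            (v ∈ p₂.support → v ∈ q₁.support → False) ∧
            (v ∈ p₂.support → v ∈ q₂.support → False) := by
          intro v
          have build : ∀ {s' u' : α} (pp : H'.Walk s' v) (qq : H'.Walk v u'),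
              s' ∈ S → u' ∈ T → c ∉ pp.support → c ∉ qq.support → False := by
            intro s' u' pp qq hs' hu' hc1 hc2
            have := hcutc (pp.append qq) hs' hu'
            rw [Walk.mem_support_append_iff] at this
            rcases this with h | h
            · exact hc1 h
            · exact hc2 h
          constructor
          · intro hv1 hv2
            by_contra hvc
            exact build (p₁.takeUntil v hv1) (q₁.dropUntil v hv2) hs₁S hu₁T
              (end_not_mem_takeUntil hp₁ hv1 hvc)
              (start_not_mem_dropUntil hq₁ hv2 hvc)
          refine ⟨?_, ?_, ?_⟩
          · intro hv1 hv2
            have hvc : v ≠ c := fun h => hcnq₂ (h ▸ hv2)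
            exact build (p₁.takeUntil v hv1) (q₂.dropUntil v hv2) hs₁S hu₂T
              (end_not_mem_takeUntil hp₁ hv1 hvc)
              (fun h => hcnq₂ (q₂.support_dropUntil_subset hv2 h))
          · intro hv1 hv2
            have hvc : v ≠ c := fun h => hcnp₂ (h ▸ hv1)
            exact build (p₂.takeUntil v hv1) (q₁.dropUntil v hv2) hs₂S hu₁T
              (fun h => hcnp₂ (p₂.support_takeUntil_subset hv1 h))
              (start_not_mem_dropUntil hq₁ hv2 hvc)
          · intro hv1 hv2
            exact build (p₂.takeUntil v hv1) (q₂.dropUntil v hv2) hs₂S hu₂T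
              (fun h => hcnp₂ (p₂.support_takeUntil_subset hv1 h))
              (fun h => hcnq₂ (q₂.support_dropUntil_subset hv2 h))
        -- membership in S/T of fan pieces
        have hq₁S : ∀ v ∈ q₁.support, v ∈ S → v = c := by
          intro v hv hvS
          by_contra hvc
          have := hcutc (q₁.dropUntil v hv) hvS hu₁T
          exact (start_not_mem_dropUntil hq₁ hv hvc) this
        have hq₂S : ∀ v ∈ q₂.support, v ∈ S → False := by
          intro v hv hvS
          have := hcutc (q₂.dropUntil v hv) hvS hu₂T
          exact hcnq₂ (q₂.support_dropUntil_subset hv this)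
        have hp₁T : ∀ v ∈ p₁.support, v ∈ T → v = c := by
          intro v hv hvT
          by_contra hvc
          have := hcutc (p₁.takeUntil v hv) hs₁S hvT
          exact (end_not_mem_takeUntil hp₁ hv hvc) this
        have hp₂T : ∀ v ∈ p₂.support, v ∈ T → False := by
          intro v hv hvT
          have := hcutc (p₂.takeUntil v hv) hs₂S hvT
          exact hcnp₂ (p₂.support_takeUntil_subset hv this)
        -- transfer everything to H
        have hed : ∀ {u v : α} (r : H'.Walk u v), ∀ e ∈ r.edges, e ∈ H.edgeSet :=
          fun r e he => SimpleGraph.edgeSet_mono hle (r.edges_subset_edgeSet he)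
        let P₁ : H.Walk s₁ c := p₁.transfer H (hed p₁)
        let P₂ : H.Walk s₂ x := p₂.transfer H (hed p₂)
        let Q₁ : H.Walk c u₁ := q₁.transfer H (hed q₁)
        let Q₂ : H.Walk y u₂ := q₂.transfer H (hed q₂)
        have hsupP₁ : P₁.support = p₁.support := Walk.support_transfer _ _
        have hsupP₂ : P₂.support = p₂.support := Walk.support_transfer _ _
        have hsupQ₁ : Q₁.support = q₁.support := Walk.support_transfer _ _
        have hsupQ₂ : Q₂.support = q₂.support := Walk.support_transfer _ _
        have hP₁ : P₁.IsPath := by rw [Walk.isPath_def, hsupP₁]; exact hp₁.support_nodup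
        have hP₂ : P₂.IsPath := by rw [Walk.isPath_def, hsupP₂]; exact hp₂.support_nodup
        have hQ₁ : Q₁.IsPath := by rw [Walk.isPath_def, hsupQ₁]; exact hq₁.support_nodup
        have hQ₂ : Q₂.IsPath := by rw [Walk.isPath_def, hsupQ₂]; exact hq₂.support_nodup
        -- glue
        have hxq₂ : x ∉ q₂.support := fun h => (cross x).2.2.2 p₂.end_mem_support h
        let path1 : H.Walk s₁ u₁ := P₁.append Q₁
        let inner : H.Walk x u₂ := Walk.cons hadj.symm Q₂
        let path2 : H.Walk s₂ u₂ := P₂.append inner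
        have hpath1 : path1.IsPath := by
          refine isPath_append hP₁ hQ₁ ?_
          intro z hz1 hz2
          rw [hsupP₁] at hz1; rw [hsupQ₁] at hz2
          exact (cross z).1 hz1 hz2
        have hinner : inner.IsPath := by
          rw [Walk.cons_isPath_iff]
          exact ⟨hQ₂, by rw [hsupQ₂]; exact hxq₂⟩
        have hpath2 : path2.IsPath := by
          refine isPath_append hP₂ hinner ?_
          intro z hz1 hz2
          rw [hsupP₂] at hz1
          rw [Walk.support_cons] at hz2
          rcases List.mem_cons.mp hz2 with rfl | hz2'
          · rfl
          · rw [hsupQ₂] at hz2'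
            exact absurd hz2' (fun h => (cross z).2.2.2 hz1 h)
        have hsup1 : ∀ z ∈ path1.support, z ∈ p₁.support ∨ z ∈ q₁.support := by
          intro z hz
          rw [Walk.mem_support_append_iff, hsupP₁, hsupQ₁] at hz
          exact hz
        have hsup2 : ∀ z ∈ path2.support, z ∈ p₂.support ∨ z ∈ q₂.support := by
          intro z hz
          rw [Walk.mem_support_append_iff, hsupP₂] at hz
          rcases hz with h | h
          · exact Or.inl h
          · rw [Walk.mem_support_iff] at h
            rcases h with rfl | h'
            · exact Or.inl p₂.end_mem_support
            · simp only [inner, Walk.support_cons, List.tail_cons] at h'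
              right
              rwa [hsupQ₂] at h'
        refine ⟨s₁, u₁, s₂, u₂, path1, path2, hpath1, hpath2, hs₁S, hs₂S, hu₁T, hu₂T,
          ?_, ?_, ?_, ?_, ?_⟩
        · intro v hv hvS
          rcases hsup1 v hv with h | h
          · exact hp₁S v h hvS
          · have hvc : v = c := hq₁S v h hvS
            subst hvc
            exact hp₁S v p₁.end_mem_support hvS
        · intro v hv hvS
          rcases hsup2 v hv with h | h
          · exact hp₂S v h hvS
          · exact absurd hvS (fun h' => hq₂S v h h')
        · intro v hv hvT
          rcases hsup1 v hv with h | h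
          · have hvc : v = c := hp₁T v h hvT
            subst hvc
            exact hq₁T v q₁.start_mem_support hvT
          · exact hq₁T v h hvT
        · intro v hv hvT
          rcases hsup2 v hv with h | h
          · exact absurd hvT (fun h' => hp₂T v h h')
          · exact hq₂T v h hvT
        · intro v hv1 hv2
          rcases hsup1 v hv1 with h1 | h1 <;> rcases hsup2 v hv2 with h2 | h2
          · exact hpdisj v h1 h2
          · exact (cross v).2.1 h1 h2
          · exact (cross v).2.2.1 h2 h1
          · exact hqdisj v h1 h2

/-- A vertex of an edge of a walk is in the support. -/
lemma mem_support_of_mem_edge {a b z : α} (p : G.Walk a b) (e : Sym2 α)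
    (he : e ∈ p.edges) (hz : z ∈ e) : z ∈ p.support := by
  induction e with
  | _ s t =>
    rcases Sym2.mem_iff.mp hz with rfl | rfl
    · exact p.fst_mem_support_of_mem_edges he
    · exact p.snd_mem_support_of_mem_edges he

/-- Inside a path, the start vertex does not occur in the tail. -/
lemma start_not_mem_tail_support {a b n : α} {h : G.Adj a n} {p : G.Walk n b}
    (hp : (Walk.cons h p).IsPath) : a ∉ p.support := by
  rw [Walk.cons_isPath_iff] at hp
  exact hp.2

/-- Menger-type alternative in an infinite graph: from `u` either a two-fan into `A`
avoiding `F`, or a single cut vertex. -/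
theorem fan_or_cut {G : SimpleGraph α} (F A : Set α) (u v₁ : α)
    (huA : u ∉ A) (huF : u ∉ F)
    (P0 : G.Walk u v₁) (hv₁ : v₁ ∈ A) (hP0F : ∀ z ∈ P0.support, z ∉ F) :
    (∃ (a b : α) (p : G.Walk u a) (q : G.Walk u b), a ∈ A ∧ b ∈ A ∧ p.IsPath ∧ q.IsPath ∧
       (∀ z ∈ p.support, z ∉ F) ∧ (∀ z ∈ q.support, z ∉ F) ∧
       (∀ z ∈ p.support, z ∈ A → z = a) ∧ (∀ z ∈ q.support, z ∈ A → z = b) ∧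
       (∀ z, z ∈ p.support → z ∈ q.support → z = u))
    ∨ (∃ c : α, c ≠ u ∧ ∀ (z : α) (w : G.Walk u z), z ∈ A →
        (∀ t ∈ w.support, t ∉ F) → c ∈ w.support) := by
  by_cases hcut : ∃ c : α, c ≠ u ∧ ∀ (z : α) (w : G.Walk u z), z ∈ A →
      (∀ t ∈ w.support, t ∉ F) → c ∈ w.support
  · exact Or.inr hcut
  push_neg at hcut
  left
  -- trim P0
  obtain ⟨a₀, p0, ha₀, hp0A, hp0sub', hp0path, -⟩ := exists_prefix_set P0.bypass A hv₁
  have hp0 : p0.IsPath := hp0path P0.bypass_isPath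
  have hp0sub : ∀ v ∈ p0.support, v ∈ P0.support :=
    fun v hv => P0.support_bypass_subset (hp0sub' v hv)
  have hp0F : ∀ z ∈ p0.support, z ∉ F := fun z hz => hP0F z (hp0sub z hz)
  -- witnesses for non-cut vertices
  have hW : ∀ c : α, c ≠ u → ∃ (z : α) (w : G.Walk u z), z ∈ A ∧ w.IsPath ∧
      (∀ t ∈ w.support, t ∉ F) ∧ c ∉ w.support ∧ (∀ t ∈ w.support, t ∈ A → t = z) := by
    intro c hc
    obtain ⟨z, w, hz, hwF, hcw⟩ := hcut c hc
    obtain ⟨z', w', hz', hw'A, hw'sub', hw'path, -⟩ := exists_prefix_set w.bypass A hz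
    have hw' : w'.IsPath := hw'path w.bypass_isPath
    have hw'sub : ∀ v ∈ w'.support, v ∈ w.support :=
      fun v hv => w.support_bypass_subset (hw'sub' v hv)
    exact ⟨z', w', hz', hw', fun t ht => hwF t (hw'sub t ht),
      fun hmem => hcw (hw'sub c hmem), hw'A⟩
  classical
  let K : Set α := {c | c ∈ p0.support ∧ c ≠ u}
  have hKfin : K.Finite := Set.Finite.subset (p0.support.finite_toSet) (fun c hc => hc.1)
  choose zW wW hzWA hwWP hwWF hwWc hwWA using fun (c : K) => hW c.1 c.2.2
  -- the finite edge set
  let E : Set (Sym2 α) := {e | e ∈ p0.edges} ∪ ⋃ (c : K), {e | e ∈ (wW c).edges}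
  have hEG : ∀ e ∈ E, e ∈ G.edgeSet := by
    intro e he
    rcases he with he | he
    · exact p0.edges_subset_edgeSet he
    · obtain ⟨s, ⟨c, rfl⟩, he⟩ := he
      exact (wW c).edges_subset_edgeSet he
  have hEF : ∀ e ∈ E, ∀ z ∈ e, z ∉ F := by
    intro e he z hz
    rcases he with he | he
    · exact hp0F z (mem_support_of_mem_edge p0 e he hz)
    · obtain ⟨s, ⟨c, rfl⟩, he⟩ := he
      exact hwWF c z (mem_support_of_mem_edge (wW c) e he hz)
  let E₁ : Set (Sym2 α) := {e ∈ E | u ∉ e}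
  let H₁ : SimpleGraph α := SimpleGraph.fromEdgeSet E₁
  have hH₁edge : H₁.edgeSet = E₁ \ {e | e.IsDiag} := SimpleGraph.edgeSet_fromEdgeSet _
  have hE₁fin : E₁.Finite := by
    have hEfin : E.Finite := by
      refine Set.Finite.union (p0.edges.finite_toSet) ?_
      haveI : Finite K := hKfin
      exact Set.finite_iUnion (fun c => (wW c).edges.finite_toSet)
    exact hEfin.subset (fun e he => he.1)
  have hH₁fin : H₁.edgeSet.Finite := by
    rw [hH₁edge]; exact hE₁fin.diff
  let S : Set α := {n | s(u, n) ∈ E}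
  -- tails of walks give H₁-walks
  have tailize : ∀ (z : α) (w : G.Walk u z), z ∈ A → w.IsPath →
      (∀ e ∈ w.edges, e ∈ E) →
      ∃ (n : α) (t : H₁.Walk n z), n ∈ S ∧ (∀ v ∈ t.support, v ∈ w.support) ∧
        u ∉ t.support := by
    intro z w hz hw hwE
    have hne : u ≠ z := fun h => huA (h ▸ hz)
    obtain ⟨n, hadj, rest, hcons⟩ := Walk.exists_eq_cons_of_ne hne w
    have hu_rest : u ∉ rest.support := by
      apply start_not_mem_tail_support (h := hadj)
      rwa [← hcons]
    have hrest_edges : ∀ e ∈ rest.edges, e ∈ H₁.edgeSet := by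
      intro e he
      have heE : e ∈ E := hwE e (by rw [hcons, Walk.edges_cons]; exact List.mem_cons_of_mem _ he)
      have hue : u ∉ e := fun hmem =>
        hu_rest (mem_support_of_mem_edge rest e he hmem)
      rw [hH₁edge]
      refine ⟨⟨heE, hue⟩, ?_⟩
      simp only [Set.mem_setOf_eq]
      exact G.not_isDiag_of_mem_edgeSet (hEG e heE)
    refine ⟨n, rest.transfer H₁ hrest_edges, ?_, ?_, ?_⟩
    · show s(u, n) ∈ E
      exact hwE _ (by rw [hcons, Walk.edges_cons]; exact List.mem_cons_self)
    · intro v hv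
      rw [Walk.support_transfer] at hv
      rw [hcons, Walk.support_cons]
      exact List.mem_cons_of_mem _ hv
    · rw [Walk.support_transfer]
      exact hu_rest
  haveI : Nonempty α := ⟨u⟩
  have hfan := menger_two (H₁.edgeSet.ncard) H₁ hH₁fin rfl S A ?hcut
  case hcut =>
    intro c''
    by_cases hc'' : c'' ∈ K
    · obtain ⟨n, t, hn, hsub, -⟩ := tailize (zW ⟨c'', hc''⟩) (wW ⟨c'', hc''⟩)
        (hzWA _) (hwWP _) (fun e he => Or.inr (Set.mem_iUnion.mpr ⟨⟨c'', hc''⟩, he⟩))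
      exact ⟨n, _, t, hn, hzWA _, fun hmem => hwWc ⟨c'', hc''⟩ (hsub c'' hmem)⟩
    · obtain ⟨n, t, hn, hsub, hu_t⟩ := tailize a₀ p0 ha₀ hp0 (fun e he => Or.inl he)
      refine ⟨n, a₀, t, hn, ha₀, fun hmem => ?_⟩
      have hcp : c'' ∈ p0.support := hsub c'' hmem
      by_cases hcu : c'' = u
      · exact hu_t (hcu ▸ hmem)
      · exact hc'' ⟨hcp, hcu⟩
  obtain ⟨n₁, a, n₂, b, p, q, hp, hq, hn₁, hn₂, haA, hbA, hpS, hqS, hpA, hqA, hdisj⟩ := hfan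
  -- lift to G
  have hSne : ∀ {n : α}, n ∈ S → G.Adj u n := by
    intro n hn
    exact (SimpleGraph.mem_edgeSet G).mp (hEG _ hn)
  have huS : u ∉ S := by
    intro hu
    exact (SimpleGraph.irrefl G) (hSne hu)
  have hu_not : ∀ {n z : α} (t : H₁.Walk n z), n ∈ S → u ∉ t.support := by
    intro n z t hn hu_t
    rcases mem_start_or_mem_edge t hu_t with rfl | ⟨e, he, hue⟩
    · exact huS hn
    · have := t.edges_subset_edgeSet he
      rw [hH₁edge] at this
      exact this.1.2 hue
  have hH₁G : ∀ {n z : α} (t : H₁.Walk n z), ∀ e ∈ t.edges, e ∈ G.edgeSet := by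
    intro n z t e he
    have := t.edges_subset_edgeSet he
    rw [hH₁edge] at this
    exact hEG e this.1.1
  have hIsPathG : ∀ {n z : α} (t : H₁.Walk n z), t.IsPath → (t.transfer G (hH₁G t)).IsPath := by
    intro n z t ht
    rw [Walk.isPath_def, Walk.support_transfer]
    exact ht.support_nodup
  have hFavoid : ∀ {n z : α} (t : H₁.Walk n z), n ∈ S → ∀ v ∈ t.support, v ∉ F := by
    intro n z t hn v hv
    rcases mem_start_or_mem_edge t hv with rfl | ⟨e, he, hve⟩
    · exact hEF _ hn v (by simp)
    · have := t.edges_subset_edgeSet he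
      rw [hH₁edge] at this
      exact hEF e this.1.1 v hve
  let P : G.Walk u a := Walk.cons (hSne hn₁) (p.transfer G (hH₁G p))
  let Q : G.Walk u b := Walk.cons (hSne hn₂) (q.transfer G (hH₁G q))
  refine ⟨a, b, P, Q, haA, hbA, ?_, ?_, ?_, ?_, ?_, ?_, ?_⟩
  · rw [Walk.cons_isPath_iff]
    exact ⟨hIsPathG p hp, by rw [Walk.support_transfer]; exact hu_not p hn₁⟩
  · rw [Walk.cons_isPath_iff]
    exact ⟨hIsPathG q hq, by rw [Walk.support_transfer]; exact hu_not q hn₂⟩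
  · intro z hz
    rw [Walk.support_cons] at hz
    rcases List.mem_cons.mp hz with rfl | hz'
    · exact huF
    · rw [Walk.support_transfer] at hz'
      exact hFavoid p hn₁ z hz'
  · intro z hz
    rw [Walk.support_cons] at hz
    rcases List.mem_cons.mp hz with rfl | hz'
    · exact huF
    · rw [Walk.support_transfer] at hz'
      exact hFavoid q hn₂ z hz'
  · intro z hz hzA
    rw [Walk.support_cons] at hz
    rcases List.mem_cons.mp hz with rfl | hz'
    · exact absurd hzA huA
    · rw [Walk.support_transfer] at hz'
      exact hpA z hz' hzA
  · intro z hz hzA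
    rw [Walk.support_cons] at hz
    rcases List.mem_cons.mp hz with rfl | hz'
    · exact absurd hzA huA
    · rw [Walk.support_transfer] at hz'
      exact hqA z hz' hzA
  · intro z hz1 hz2
    rw [Walk.support_cons] at hz1 hz2
    rcases List.mem_cons.mp hz1 with rfl | hz1'
    · rfl
    · rcases List.mem_cons.mp hz2 with rfl | hz2'
      · rfl
      · rw [Walk.support_transfer] at hz1' hz2'
        exact absurd hz2' (hdisj z hz1')



lemma length_drop {a b : α} : ∀ (p : G.Walk a b) (n : ℕ), (p.drop n).length = p.length - n := by
  intro p
  induction p with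
  | nil => intro n; cases n <;> simp [Walk.drop]
  | @cons u v w h q ih =>
    intro n
    cases n with
    | zero => simp [Walk.drop]
    | succ n =>
      show (q.drop n).length = _
      rw [ih n]
      simp [Walk.length_cons]

lemma getVert_drop {a b : α} : ∀ (p : G.Walk a b) (n k : ℕ),
    (p.drop n).getVert k = p.getVert (n + k) := by
  intro p
  induction p with
  | nil => intro n k; cases n <;> simp [Walk.drop, Walk.getVert]
  | @cons u v w h q ih =>
    intro n k
    cases n with
    | zero => simp [Walk.drop]
    | succ n =>
      show (q.drop n).getVert k = _
      rw [ih n k]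
      have : n + 1 + k = (n + k) + 1 := by omega
      rw [this, Walk.getVert_cons_succ]

lemma dist_getVert_le (hconn : G.Connected) {a b : α} (p : G.Walk a b) (k : ℕ) :
    G.dist a (p.getVert k) ≤ k := by
  induction p generalizing k with
  | nil => simp [Walk.getVert, SimpleGraph.dist_self]
  | @cons u v w h q ih =>
    cases k with
    | zero => simp [Walk.getVert_zero]
    | succ k =>
      rw [Walk.getVert_cons_succ]
      calc G.dist u (q.getVert k) ≤ G.dist u v + G.dist v (q.getVert k) :=
            hconn.dist_triangle
        _ ≤ 1 + k := by
            have h1 : G.dist u v ≤ 1 := by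
              have := SimpleGraph.dist_le (Walk.cons h (Walk.nil) : G.Walk u v)
              simpa using this
            exact Nat.add_le_add h1 (ih k)
        _ = k + 1 := by omega

lemma dist_getVert_eq (hconn : G.Connected) {a b : α} (p : G.Walk a b)
    (hgeo : p.length = G.dist a b) (k : ℕ) (hk : k ≤ p.length) :
    G.dist a (p.getVert k) = k := by
  refine le_antisymm (dist_getVert_le hconn p k) ?_
  have h1 : G.dist (p.getVert k) b ≤ p.length - k := by
    have := SimpleGraph.dist_le (p.drop k)
    rwa [length_drop] at this
  have h2 : G.dist a b ≤ G.dist a (p.getVert k) + G.dist (p.getVert k) b :=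
    hconn.dist_triangle
  omega

/-- Balls are finite in a connected locally finite graph. -/
lemma ball_finite (hconn : G.Connected) (hlf : ∀ v : α, (G.neighborSet v).Finite)
    (v0 : α) : ∀ n : ℕ, {v : α | G.dist v0 v ≤ n}.Finite := by
  intro n
  induction n with
  | zero =>
    refine Set.Finite.subset (Set.finite_singleton v0) ?_
    intro v hv
    simp only [Set.mem_setOf_eq, Nat.le_zero] at hv
    exact (hconn.dist_eq_zero_iff.mp hv).symm
  | succ n ih =>
    refine Set.Finite.subset (ih.union (ih.biUnion (fun w _ => hlf w))) ?_
    intro v hv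
    simp only [Set.mem_setOf_eq] at hv
    by_cases hvn : G.dist v0 v ≤ n
    · exact Or.inl hvn
    · have hd : G.dist v0 v = n + 1 := by omega
      obtain ⟨p, hp⟩ := (hconn.preconnected v0 v).exists_walk_length_eq_dist
      right
      refine Set.mem_biUnion (s := {v : α | G.dist v0 v ≤ n}) (show G.dist v0 (p.getVert n) ≤ n from ?_) ?_
      · rw [dist_getVert_eq hconn p (by omega) n (by omega)]
      · show v ∈ G.neighborSet (p.getVert n)
        have hadj := p.adj_getVert_succ (i := n) (by omega)
        have : p.getVert (n + 1) = v := by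
          have := p.getVert_length
          rw [hp, hd] at this
          exact this
        rw [this] at hadj
        exact hadj

/-- The geodesic ray with an invariant family of infinite sets. -/
theorem exists_geodesic_ray (hconn : G.Connected) (hlf : ∀ v : α, (G.neighborSet v).Finite)
    (U : Set α) (hU : U.Infinite) (v0 : α) :
    ∃ (r : ℕ → α) (I : ℕ → Set α),
      (∀ n, G.dist v0 (r n) = n) ∧ (∀ n, G.Adj (r n) (r (n + 1))) ∧
      (∀ n, I n ⊆ U) ∧ (∀ n, (I n).Infinite) ∧ (∀ n, I (n + 1) ⊆ I n) ∧
      (∀ n u, u ∈ I n → ∃ (t : G.Walk (r n) u), ∀ z ∈ t.support, n ≤ G.dist v0 z) := by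
  classical
  -- choose geodesics
  have hgeo : ∀ u : α, ∃ p : G.Walk v0 u, p.length = G.dist v0 u :=
    fun u => (hconn.preconnected v0 u).exists_walk_length_eq_dist
  choose geo hgeolen using hgeo
  set Inv : (n : ℕ) → α → Set α → Prop :=
    fun n v I => I ⊆ U ∧ I.Infinite ∧ ∀ u ∈ I, n < G.dist v0 u ∧ (geo u).getVert n = v
    with hInv
  have hbase : Inv 0 v0 {u ∈ U | v0 ≠ u} := by
    refine ⟨fun u hu => hu.1, ?_, ?_⟩
    · refine Set.Infinite.mono ?_ (hU.diff (Set.finite_singleton v0))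
      intro u hu
      exact ⟨hu.1, fun h => hu.2 h.symm⟩
    · intro u hu
      constructor
      · rcases Nat.eq_zero_or_pos (G.dist v0 u) with h | h
        · exact absurd (hconn.dist_eq_zero_iff.mp h) hu.2
        · exact h
      · exact (geo u).getVert_zero
  have hstep : ∀ (n : ℕ) (v : α) (I : Set α), Inv n v I →
      ∃ (v' : α) (I' : Set α), I' ⊆ I ∧ Inv (n + 1) v' I' := by
    intro n v I ⟨hIU, hIinf, hImem⟩
    set I₁ : Set α := {u ∈ I | n + 1 < G.dist v0 u} with hI₁
    have hI₁inf : I₁.Infinite := by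
      have : I \ I₁ ⊆ {z | G.dist v0 z ≤ n + 1} := by
        intro u hu
        simp only [Set.mem_setOf_eq]
        have : ¬ (n + 1 < G.dist v0 u) := fun h => hu.2 ⟨hu.1, h⟩
        omega
      have hfin : (I \ I₁).Finite := (ball_finite hconn hlf v0 (n + 1)).subset this
      have := hIinf.diff hfin
      refine this.mono ?_
      intro u hu
      by_contra h
      exact hu.2 ⟨hu.1, h⟩
    have hfiber : ∀ u ∈ I₁, (geo u).getVert (n + 1) ∈ G.neighborSet v := by
      intro u hu
      have h1 := (hImem u hu.1).2
      have h2 : n < (geo u).length := by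
        rw [hgeolen u]; exact lt_trans (Nat.lt_succ_self n) hu.2
      have := (geo u).adj_getVert_succ h2
      rw [h1] at this
      exact this
    have hcover : I₁ ⊆ ⋃ w ∈ G.neighborSet v, {u ∈ I₁ | (geo u).getVert (n + 1) = w} := by
      intro u hu
      exact Set.mem_biUnion (hfiber u hu) ⟨hu, rfl⟩
    have hex : ∃ w ∈ G.neighborSet v, {u ∈ I₁ | (geo u).getVert (n + 1) = w}.Infinite := by
      by_contra hno
      push_neg at hno
      have hfin : (⋃ w ∈ G.neighborSet v, {u ∈ I₁ | (geo u).getVert (n + 1) = w}).Finite :=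
        Set.Finite.biUnion (hlf v) (fun w hw => hno w hw)
      exact hI₁inf (hfin.subset hcover)
    obtain ⟨w, hw, hwinf⟩ := hex
    refine ⟨w, {u ∈ I₁ | (geo u).getVert (n + 1) = w}, fun u hu => hu.1.1, ?_, hwinf, ?_⟩
    · exact fun u hu => hIU hu.1.1
    · exact fun u hu => ⟨hu.1.2, hu.2⟩
  -- package the recursion
  let f : ∀ n : ℕ, Σ' (v : α) (I : Set α), Inv n v I :=
    fun n => Nat.rec ⟨v0, {u ∈ U | v0 ≠ u}, hbase⟩ (fun n ih =>
      ⟨(hstep n ih.1 ih.2.1 ih.2.2).choose,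
       (hstep n ih.1 ih.2.1 ih.2.2).choose_spec.choose,
       (hstep n ih.1 ih.2.1 ih.2.2).choose_spec.choose_spec.2⟩) n
  have hmono : ∀ n : ℕ, (f (n + 1)).2.1 ⊆ (f n).2.1 :=
    fun n => (hstep n (f n).1 (f n).2.1 (f n).2.2).choose_spec.choose_spec.1
  have hInvn : ∀ n, Inv n (f n).1 (f n).2.1 := fun n => (f n).2.2
  refine ⟨fun n => (f n).1, fun n => (f n).2.1, ?_, ?_, ?_, ?_, hmono, ?_⟩
  · intro n
    show G.dist v0 (f n).1 = n
    obtain ⟨u, hu⟩ := (hInvn n).2.1.nonempty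
    obtain ⟨hlt, hgv⟩ := (hInvn n).2.2 u hu
    rw [← hgv]
    exact dist_getVert_eq hconn (geo u) (hgeolen u) n (by rw [hgeolen u]; omega)
  · intro n
    show G.Adj (f n).1 (f (n + 1)).1
    obtain ⟨u, hu⟩ := (hInvn (n + 1)).2.1.nonempty
    obtain ⟨hlt1, hgv1⟩ := (hInvn (n + 1)).2.2 u hu
    obtain ⟨hlt0, hgv0⟩ := (hInvn n).2.2 u (hmono n hu)
    have hadj := (geo u).adj_getVert_succ (i := n)
      (by rw [hgeolen u]; omega)
    rw [hgv0, hgv1] at hadj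
    exact hadj
  · exact fun n => (hInvn n).1
  · exact fun n => (hInvn n).2.1
  · intro n u hu
    show ∃ t : G.Walk (f n).1 u, ∀ z ∈ t.support, n ≤ G.dist v0 z
    obtain ⟨hlt, hgv⟩ := (hInvn n).2.2 u hu
    refine ⟨((geo u).drop n).copy hgv rfl, ?_⟩
    intro z hz
    rw [Walk.support_copy] at hz
    rw [Walk.mem_support_iff_exists_getVert] at hz
    obtain ⟨j, hj, -⟩ := hz
    rw [getVert_drop] at hj
    subst hj
    by_cases hnj : n + j ≤ (geo u).length
    · rw [dist_getVert_eq hconn (geo u) (hgeolen u) (n + j) hnj]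
      omega
    · have : (geo u).getVert (n + j) = u := by
        apply Walk.getVert_of_length_le
        omega
      rw [this]
      omega


def ReachAvoid (G : SimpleGraph α) (F : Set α) (x y : α) : Prop :=
  ∃ w : G.Walk x y, ∀ z ∈ w.support, z ∉ F

lemma ReachAvoid.symm {F : Set α} {x y : α} (h : ReachAvoid G F x y) : ReachAvoid G F y x := by
  obtain ⟨w, hw⟩ := h
  exact ⟨w.reverse, fun z hz => hw z (by rwa [Walk.support_reverse, List.mem_reverse] at hz)⟩

lemma ReachAvoid.trans {F : Set α} {x y z : α} (h1 : ReachAvoid G F x y)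
    (h2 : ReachAvoid G F y z) : ReachAvoid G F x z := by
  obtain ⟨w1, hw1⟩ := h1
  obtain ⟨w2, hw2⟩ := h2
  refine ⟨w1.append w2, fun t ht => ?_⟩
  rw [Walk.mem_support_append_iff] at ht
  rcases ht with ht | ht
  · exact hw1 t ht
  · exact hw2 t ht

lemma ReachAvoid.step {F : Set α} {x y z : α} (h1 : ReachAvoid G F x y)
    (hadj : G.Adj y z) (hz : z ∉ F) : ReachAvoid G F x z := by
  obtain ⟨w1, hw1⟩ := h1
  refine ReachAvoid.trans ⟨w1, hw1⟩ ⟨Walk.cons hadj Walk.nil, ?_⟩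
  intro t ht
  rw [Walk.support_cons] at ht
  rcases List.mem_cons.mp ht with rfl | ht'
  · exact hw1 t w1.end_mem_support
  · rw [Walk.support_nil] at ht'
    have := List.mem_singleton.mp ht'
    subst this
    exact hz

/-- Transfer a walk in an induced subgraph to the ambient graph. -/
lemma induce_walk_exists {s : Set α} : ∀ {a b : ↥s} (w : (G.induce s).Walk a b),
    ∃ p : G.Walk a.val b.val, ∀ z ∈ p.support, z ∈ s := by
  intro a b w
  induction w with
  | nil =>
    refine ⟨Walk.nil, ?_⟩
    intro z hz
    rw [Walk.support_nil] at hz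
    have := List.mem_singleton.mp hz
    subst this
    exact Subtype.coe_prop _
  | @cons u v w h p ih =>
    obtain ⟨q, hq⟩ := ih
    have hadj : G.Adj u.val v.val := h
    refine ⟨Walk.cons hadj q, ?_⟩
    intro z hz
    rw [Walk.support_cons] at hz
    rcases List.mem_cons.mp hz with rfl | hz'
    · exact u.2
    · exact hq z hz'

/-- Walking from inside a set to outside it crosses the boundary. -/
lemma exists_boundary (P : Set α) : ∀ {x y : α} (w : G.Walk x y), x ∈ P → y ∉ P →
    ∃ p q : α, G.Adj p q ∧ p ∈ P ∧ q ∉ P ∧ q ∈ w.support := by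
  intro x y w
  induction w with
  | nil => intro hx hy; exact absurd hx hy
  | @cons u v w h p ih =>
    intro hx hy
    by_cases hv : v ∈ P
    · obtain ⟨p', q', h1, h2, h3, h4⟩ := ih hv hy
      refine ⟨p', q', h1, h2, h3, ?_⟩
      rw [Walk.support_cons]
      exact List.mem_cons_of_mem _ h4
    · refine ⟨u, v, h, hx, hv, ?_⟩
      rw [Walk.support_cons]
      exact List.mem_cons_of_mem _ p.start_mem_support

theorem jump_lemma {G : SimpleGraph α}
    (hconn : G.Connected) (hlf : ∀ v : α, (G.neighborSet v).Finite)
    (h2c : ∀ v : α, (G.induce {u | u ≠ v}).Connected)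
    (U : Set α) (v0 : α) (r : ℕ → α) (I : ℕ → Set α)
    (hrdist : ∀ n, G.dist v0 (r n) = n)
    (hIU : ∀ n, I n ⊆ U) (hIinf : ∀ n, (I n).Infinite)
    (hteeth : ∀ n u, u ∈ I n → ∃ t : G.Walk (r n) u, ∀ z ∈ t.support, n ≤ G.dist v0 z)
    (hUr : (U ∩ Set.range r).Finite)
    (F : Set α) (hF : F.Finite) :
    ∃ (i j : ℕ) (J : G.Walk (r i) (r j)), i ≠ j ∧ J.IsPath ∧
      (∀ z ∈ J.support, z ∉ F) ∧
      (∀ z ∈ J.support, z ∈ Set.range r → z = r i ∨ z = r j) ∧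
      (∃ w ∈ J.support, w ∈ U ∧ w ∉ Set.range r) := by
  classical
  obtain ⟨m, hm⟩ : ∃ m, ∀ f ∈ F, G.dist v0 f ≤ m := by
    rcases (hF.image (G.dist v0)).bddAbove with ⟨m, hmm⟩
    exact ⟨m, fun f hf => hmm (Set.mem_image_of_mem _ hf)⟩
  have tooth : ∀ ℓ : ℕ, ∃ (u : α) (t : G.Walk (r ℓ) u), u ∈ U ∧ u ∉ Set.range r ∧
      ∀ z ∈ t.support, ℓ ≤ G.dist v0 z := by
    intro ℓ
    have h1 : (I ℓ \ Set.range r).Infinite := by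
      have hsub : I ℓ ∩ Set.range r ⊆ U ∩ Set.range r := fun z hz => ⟨hIU ℓ hz.1, hz.2⟩
      have h2 := (hIinf ℓ).diff (hUr.subset hsub)
      refine h2.mono ?_
      intro z hz
      refine ⟨hz.1, fun hr => hz.2 ⟨hz.1, hr⟩⟩
    obtain ⟨u, hu⟩ := h1.nonempty
    obtain ⟨t, ht⟩ := hteeth ℓ u hu.1
    exact ⟨u, t, hIU ℓ hu.1, hu.2, ht⟩
  choose uT tT hUT hnrT htT using tooth
  have hMbx : ∀ ℓ : ℕ, ∃ M, ∀ z ∈ (tT ℓ).support, G.dist v0 z ≤ M := by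
    intro ℓ
    rcases ((tT ℓ).support.finite_toSet.image (G.dist v0)).bddAbove with ⟨M, hM⟩
    exact ⟨M, fun z hz => hM (Set.mem_image_of_mem _ hz)⟩
  choose Mb hMb using hMbx
  let lev : ℕ → ℕ := fun i => Nat.rec (m + 1) (fun _ prev => Mb prev + 1) i
  have hlev0 : lev 0 = m + 1 := rfl
  have hlevS : ∀ i, lev (i + 1) = Mb (lev i) + 1 := fun i => rfl
  have hlevlb : ∀ i, lev i ≤ Mb (lev i) := by
    intro i
    have h1 : r (lev i) ∈ (tT (lev i)).support := Walk.start_mem_support _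
    have h2 := hMb (lev i) _ h1
    rwa [hrdist] at h2
  have hlevgt : ∀ i, m < lev i := by
    intro i
    induction i with
    | zero => omega
    | succ i ih =>
      have h1 := hlevlb i
      have h2 := hlevS i
      omega
  have hlevmono : ∀ i j, i < j → Mb (lev i) < lev j := by
    intro i j hij
    induction j with
    | zero => omega
    | succ j ih =>
      rw [hlevS]
      rcases Nat.lt_succ_iff_lt_or_eq.mp hij with h | h
      · have h2 := ih h
        have h3 := hlevlb j
        have h4 : Mb (lev i) < Mb (lev j) := by omega
        omega
      · subst h; omega
  have hTdist : ∀ i z, z ∈ (tT (lev i)).support →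
      lev i ≤ G.dist v0 z ∧ G.dist v0 z ≤ Mb (lev i) :=
    fun i z hz => ⟨htT _ z hz, hMb _ z hz⟩
  have hTF : ∀ i z, z ∈ (tT (lev i)).support → z ∉ F := by
    intro i z hz hzF
    have h1 := (hTdist i z hz).1
    have h2 := hm z hzF
    have h3 := hlevgt i
    omega
  have hTdisj : ∀ i j, i < j → ∀ z, z ∈ (tT (lev i)).support →
      z ∈ (tT (lev j)).support → False := by
    intro i j hij z hzi hzj
    have h1 := (hTdist i z hzi).2
    have h2 := (hTdist j z hzj).1
    have h3 := hlevmono i j hij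
    omega
  set A : Set α := Set.range r \ F with hA
  have hrA : ∀ i, r (lev i) ∈ A := by
    intro i
    refine ⟨Set.mem_range_self _, fun hf => ?_⟩
    have h1 := hm _ hf
    rw [hrdist] at h1
    have := hlevgt i
    omega
  have huTA : ∀ i, uT (lev i) ∉ A := fun i hA' => hnrT (lev i) hA'.1
  have huTF : ∀ i, uT (lev i) ∉ F :=
    fun i => hTF i _ (Walk.end_mem_support _)
  have hrevF : ∀ i, ∀ z ∈ (tT (lev i)).reverse.support, z ∉ F := by
    intro i z hz
    rw [Walk.support_reverse, List.mem_reverse] at hz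
    exact hTF i z hz
  have halt := fun i : ℕ => fan_or_cut (G := G) F A (uT (lev i)) (r (lev i))
    (huTA i) (huTF i) (tT (lev i)).reverse (hrA i) (hrevF i)
  by_cases hEx : ∃ i : ℕ, ∃ (a b : α) (p : G.Walk (uT (lev i)) a) (q : G.Walk (uT (lev i)) b),
      a ∈ A ∧ b ∈ A ∧ p.IsPath ∧ q.IsPath ∧
      (∀ z ∈ p.support, z ∉ F) ∧ (∀ z ∈ q.support, z ∉ F) ∧
      (∀ z ∈ p.support, z ∈ A → z = a) ∧ (∀ z ∈ q.support, z ∈ A → z = b) ∧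
      (∀ z, z ∈ p.support → z ∈ q.support → z = uT (lev i))
  · -- build the jump from the two-fan
    obtain ⟨i, a, b, p, q, haA, hbA, hp, hq, hpF, hqF, hpA, hqA, hmeet⟩ := hEx
    obtain ⟨ia, hia⟩ := haA.1
    obtain ⟨ib, hib⟩ := hbA.1
    have hab : a ≠ b := by
      rintro rfl
      have h1 : a ∈ p.support := Walk.end_mem_support _
      have h2 : a ∈ q.support := Walk.end_mem_support _
      have := hmeet a h1 h2
      subst this
      exact huTA i haA
    let J0 : G.Walk a b := p.reverse.append q
    have hsupJ0 : ∀ z, z ∈ J0.support ↔ (z ∈ p.support ∨ z ∈ q.support) := by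
      intro z
      rw [Walk.mem_support_append_iff, Walk.support_reverse, List.mem_reverse]
    refine ⟨ia, ib, (J0.copy hia.symm hib.symm), ?_, ?_, ?_, ?_, ?_⟩
    · intro h
      rw [h] at hia
      exact hab (hia.symm.trans hib)
    · rw [Walk.isPath_copy]
      refine isPath_append hp.reverse hq ?_
      intro z hz1 hz2
      rw [Walk.support_reverse, List.mem_reverse] at hz1
      exact hmeet z hz1 hz2
    · intro z hz
      rw [Walk.support_copy] at hz
      rcases (hsupJ0 z).mp hz with h | h
      · exact hpF z h
      · exact hqF z h
    · intro z hz hzr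
      rw [Walk.support_copy] at hz
      have hzF : z ∉ F := by
        rcases (hsupJ0 z).mp hz with h | h
        · exact hpF z h
        · exact hqF z h
      have hzA : z ∈ A := ⟨hzr, hzF⟩
      rcases (hsupJ0 z).mp hz with h | h
      · left; rw [hia]; exact (hpA z h hzA) ▸ rfl
      · right; rw [hib]; exact (hqA z h hzA) ▸ rfl
    · refine ⟨uT (lev i), ?_, hUT (lev i), hnrT (lev i)⟩
      rw [Walk.support_copy]
      exact (hsupJ0 _).mpr (Or.inr (Walk.start_mem_support _))
  · -- all teeth are cut off: pocket argument
    have hcut : ∀ i : ℕ, ∃ c, c ≠ uT (lev i) ∧ ∀ (z : α) (w : G.Walk (uT (lev i)) z),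
        z ∈ A → (∀ t ∈ w.support, t ∉ F) → c ∈ w.support := by
      intro i
      rcases halt i with h | h
      · exact absurd ⟨i, h⟩ hEx
      · exact h
    choose c hcne hcprop using hcut
    have hcT : ∀ i, c i ∈ (tT (lev i)).support := by
      intro i
      have h1 := hcprop i (r (lev i)) (tT (lev i)).reverse (hrA i) (hrevF i)
      rwa [Walk.support_reverse, List.mem_reverse] at h1
    set Pk : ℕ → Set α := fun i => {z | ReachAvoid G (F ∪ {c i}) (uT (lev i)) z} with hPk
    have hupk : ∀ i, uT (lev i) ∈ Pk i := by
      intro i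
      refine ⟨Walk.nil, ?_⟩
      intro z hz
      rw [Walk.support_nil] at hz
      have := List.mem_singleton.mp hz
      subst this
      rintro (h | h)
      · exact huTF i h
      · exact (hcne i) (Set.mem_singleton_iff.mp h).symm
    have hPkA : ∀ i z, z ∈ Pk i → z ∈ A → False := by
      intro i z hz hzA
      obtain ⟨w, hw⟩ := hz
      have h1 := hcprop i z w hzA (fun t ht => fun hF' => hw t ht (Or.inl hF'))
      exact hw _ h1 (Or.inr rfl)
    have hwNF : ∀ i : ℕ, ∃ w, w ∈ Pk i ∧ ∃ f ∈ F, G.Adj f w := by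
      intro i
      have hzne : r (lev (i + 1)) ≠ c i := by
        intro h
        exact hTdisj i (i + 1) (Nat.lt_succ_self i) (c i) (hcT i)
          (h ▸ Walk.start_mem_support _)
      have hune : uT (lev i) ≠ c i := fun h => (hcne i) h.symm
      obtain ⟨w'⟩ := (h2c (c i)).preconnected ⟨uT (lev i), hune⟩ ⟨r (lev (i + 1)), hzne⟩
      obtain ⟨pw, hpw⟩ := induce_walk_exists w'
      have hznPk : r (lev (i + 1)) ∉ Pk i := fun h => hPkA i _ h (hrA (i + 1))
      obtain ⟨pv, qv, hadj, hpPk, hqPk, hqsup⟩ := exists_boundary (Pk i) pw (hupk i) hznPk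
      have hqc : qv ≠ c i := hpw qv hqsup
      have hqF : qv ∈ F := by
        by_contra hqF'
        refine hqPk ?_
        refine ReachAvoid.step hpPk hadj ?_
        rintro (h | h)
        · exact hqF' h
        · exact hqc (Set.mem_singleton_iff.mp h)
      exact ⟨pv, hpPk, qv, hqF, hadj.symm⟩
    choose wB hwPk fB hfBF hfBadj using hwNF
    set NF : Set α := ⋃ f ∈ F, G.neighborSet f with hNF
    have hNFfin : NF.Finite := hF.biUnion (fun f _ => hlf f)
    have hwNF' : ∀ i, wB i ∈ NF := fun i => Set.mem_biUnion (hfBF i) (hfBadj i)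
    have hP1 : ∃ w' : α, {i : ℕ | wB i = w'}.Infinite := by
      by_contra hno
      push_neg at hno
      have hcov : (Set.univ : Set ℕ) ⊆ ⋃ w ∈ NF, {i : ℕ | wB i = w} :=
        fun i _ => Set.mem_biUnion (hwNF' i) rfl
      exact Set.infinite_univ ((hNFfin.biUnion (fun w _ => hno w)).subset hcov)
    obtain ⟨w', hw'inf⟩ := hP1
    obtain ⟨i₀, hi₀⟩ := hw'inf.nonempty
    have hwPk₀ : w' ∈ Pk i₀ := hi₀ ▸ hwPk i₀
    obtain ⟨W1, hW1⟩ := hwPk₀.symm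
    set WW : G.Walk w' (r (lev i₀)) := W1.append (tT (lev i₀)).reverse with hWW
    have hWWF : ∀ z ∈ WW.support, z ∉ F := by
      intro z hz
      rw [Walk.mem_support_append_iff] at hz
      rcases hz with h | h
      · exact fun hF' => hW1 z h (Or.inl hF')
      · exact hrevF i₀ z h
    have hcWW : ∀ i, wB i = w' → c i ∈ WW.support := by
      intro i hieq
      have hwPki : w' ∈ Pk i := hieq ▸ hwPk i
      obtain ⟨W2, hW2⟩ := hwPki
      have h1 := hcprop i (r (lev i₀)) (W2.append WW) (hrA i₀) ?_
      · rw [Walk.mem_support_append_iff] at h1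
        rcases h1 with h | h
        · exact absurd (Or.inr rfl : c i ∈ F ∪ {c i}) (hW2 _ h)
        · exact h
      · intro t ht
        rw [Walk.mem_support_append_iff] at ht
        rcases ht with h | h
        · exact fun hF' => hW2 t h (Or.inl hF')
        · exact hWWF t h
    have hP2 : ∃ i j : ℕ, i ≠ j ∧ wB i = w' ∧ wB j = w' ∧ c i = c j := by
      have hsub : {i : ℕ | wB i = w'} ⊆ ⋃ x ∈ {x | x ∈ WW.support}, {i : ℕ | wB i = w' ∧ c i = x} := by
        intro i hi
        exact Set.mem_biUnion (hcWW i hi) ⟨hi, rfl⟩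
      have : ∃ x ∈ {x | x ∈ WW.support}, {i : ℕ | wB i = w' ∧ c i = x}.Infinite := by
        by_contra hno
        push_neg at hno
        exact hw'inf ((Set.Finite.biUnion (WW.support.finite_toSet) (fun x hx => hno x hx)).subset hsub)
      obtain ⟨x, -, hxinf⟩ := this
      obtain ⟨i, hi, j, hj, hij⟩ := hxinf.nontrivial
      exact ⟨i, j, hij, hi.1, hj.1, hi.2.trans hj.2.symm⟩
    obtain ⟨i, j, hij, -, -, hcij⟩ := hP2
    rcases lt_or_gt_of_ne hij with h | h
    · exact absurd (hcij ▸ hcT j) (fun hh => hTdisj i j h (c i) (hcT i) hh)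
    · exact absurd (hcij ▸ hcT j) (fun hh => hTdisj j i h (c i) hh (hcT i))

lemma getVert_inj_of_isPath {a b : α} : ∀ (p : G.Walk a b), p.IsPath →
    ∀ i j, i ≤ p.length → j ≤ p.length → p.getVert i = p.getVert j → i = j := by
  intro p
  induction p with
  | nil => intro _ i j hi hj _; simp only [Walk.length_nil, Nat.le_zero] at hi hj; omega
  | @cons u v w h q ih =>
    intro hp i j hi hj heq
    rw [Walk.cons_isPath_iff] at hp
    rw [Walk.length_cons] at hi hj
    match i, j with
    | 0, 0 => rfl
    | 0, j + 1 =>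
      exfalso
      rw [Walk.getVert_zero, Walk.getVert_cons_succ] at heq
      exact hp.2 (heq ▸ Walk.mem_support_iff_exists_getVert.mpr ⟨j, rfl, by omega⟩)
    | i + 1, 0 =>
      exfalso
      rw [Walk.getVert_zero, Walk.getVert_cons_succ] at heq
      exact hp.2 (heq ▸ Walk.mem_support_iff_exists_getVert.mpr ⟨i, rfl, by omega⟩)
    | i + 1, j + 1 =>
      rw [Walk.getVert_cons_succ, Walk.getVert_cons_succ] at heq
      have := ih hp.1 i j (by omega) (by omega) heq
      omega

lemma isPath_concat {a b c : α} {p : G.Walk a b} (hp : p.IsPath) (h : G.Adj b c)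
    (hc : c ∉ p.support) : (p.concat h).IsPath := by
  rw [Walk.concat_eq_append]
  refine isPath_append hp ?_ ?_
  · rw [Walk.cons_isPath_iff]
    refine ⟨Walk.IsPath.nil, ?_⟩
    rw [Walk.support_nil]
    intro hmem
    have := List.mem_singleton.mp hmem
    exact h.ne this
  · intro z hz1 hz2
    rw [Walk.support_cons, Walk.support_nil] at hz2
    rcases List.mem_cons.mp hz2 with rfl | hz2'
    · rfl
    · have := List.mem_singleton.mp hz2'
      subst this
      exact absurd hz1 hc

theorem ray_through_infinitely_many' {α : Type} [Countable α] (G : SimpleGraph α)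
    (hconn : G.Connected)
    (h2c : ∀ v : α, (G.induce {u | u ≠ v}).Connected)
    (hlf : ∀ v : α, (G.neighborSet v).Finite)
    (U : Set α) (hU : U.Infinite) :
    ∃ r : ℕ → α, (Function.Injective r ∧ ∀ n, G.Adj (r n) (r (n + 1))) ∧
      (U ∩ Set.range r).Infinite := by
  classical
  obtain ⟨v0, -⟩ := hU.nonempty
  obtain ⟨r, I, hrdist, hradj, hIU, hIinf, hImono, hteeth⟩ :=
    RayProof.exists_geodesic_ray hconn hlf U hU v0
  have hrinj : Function.Injective r := by
    intro a b hab
    have h1 := hrdist a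
    rw [hab, hrdist b] at h1
    omega
  by_cases hUr : (U ∩ Set.range r).Infinite
  · exact ⟨r, ⟨hrinj, hradj⟩, hUr⟩
  rw [Set.not_infinite] at hUr
  -- ray segments
  have hseg : ∀ (m k : ℕ), ∃ w : G.Walk (r m) (r (m + k)), w.IsPath ∧
      (∀ z ∈ w.support, ∃ t, m ≤ t ∧ t ≤ m + k ∧ z = r t) := by
    intro m k
    induction k with
    | zero =>
      refine ⟨Walk.nil, Walk.IsPath.nil, ?_⟩
      intro z hz
      rw [Walk.support_nil] at hz
      have := List.mem_singleton.mp hz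
      exact ⟨m, le_rfl, le_rfl, this⟩
    | succ k ih =>
      obtain ⟨w, hw, hsup⟩ := ih
      have hnot : r (m + k + 1) ∉ w.support := by
        intro hmem
        obtain ⟨t, ht1, ht2, ht3⟩ := hsup _ hmem
        have := hrinj ht3
        omega
      refine ⟨w.concat (hradj (m + k)), RayProof.isPath_concat hw _ hnot, ?_⟩
      intro z hz
      rw [Walk.support_concat, List.mem_append,
        List.mem_singleton] at hz
      rcases hz with h | h
      · obtain ⟨t, ht1, ht2, ht3⟩ := hsup _ h
        exact ⟨t, ht1, by omega, ht3⟩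
      · exact ⟨m + k + 1, by omega, by omega, h⟩
  -- the extension step
  have hstep : ∀ (ms : ℕ) (Wk : G.Walk v0 (r ms)) (CU : Finset α),
      Wk.IsPath → (∀ k, ms < k → r k ∉ Wk.support) → (↑CU ⊆ U ∩ {z | z ∈ Wk.support}) →
      ∃ (ms' : ℕ) (Wk' : G.Walk v0 (r ms')) (CU' : Finset α),
        Wk'.IsPath ∧ (∀ k, ms' < k → r k ∉ Wk'.support) ∧
        (↑CU' ⊆ U ∩ {z | z ∈ Wk'.support}) ∧ CU'.card = CU.card + 1 ∧
        (∃ ext : G.Walk (r ms) (r ms'), Wk' = Wk.append ext) ∧ Wk.length < Wk'.length := by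
    intro ms Wk CU hWkP hWkInv hCU
    set F : Set α := {z | z ∈ Wk.support} ∪ {z | G.dist v0 z ≤ ms} with hFdef
    have hFfin : F.Finite :=
      (Wk.support.finite_toSet).union (RayProof.ball_finite hconn hlf v0 ms)
    have hWkF : ∀ z ∈ Wk.support, z ∈ F := fun z hz => Or.inl hz
    have hidx : ∀ k : ℕ, r k ∉ F → ms < k := by
      intro k hk
      by_contra h
      refine hk (Or.inr ?_)
      simp only [Set.mem_setOf_eq]
      rw [hrdist]
      omega
    have build : ∀ (i j : ℕ) (J : G.Walk (r i) (r j)), i < j → J.IsPath →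
        (∀ z ∈ J.support, z ∉ F) → (∀ z ∈ J.support, z ∈ Set.range r → z = r i ∨ z = r j) →
        (∃ w ∈ J.support, w ∈ U ∧ w ∉ Set.range r) →
        ∃ (ms' : ℕ) (Wk' : G.Walk v0 (r ms')) (CU' : Finset α),
          Wk'.IsPath ∧ (∀ k, ms' < k → r k ∉ Wk'.support) ∧
          (↑CU' ⊆ U ∩ {z | z ∈ Wk'.support}) ∧ CU'.card = CU.card + 1 ∧
          (∃ ext : G.Walk (r ms) (r ms'), Wk' = Wk.append ext) ∧ Wk.length < Wk'.length := by
      intro i j J hij hJP hJF hJr hJu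
      obtain ⟨u', hu'J, hu'U, hu'nr⟩ := hJu
      have hmsi : ms < i := hidx i (hJF _ (Walk.start_mem_support _))
      obtain ⟨seg0, hsegP0, hsegsup0⟩ := hseg ms (i - ms)
      have hieq : ms + (i - ms) = i := by omega
      let seg : G.Walk (r ms) (r i) := seg0.copy rfl (congrArg r hieq)
      have hsegP : seg.IsPath := by
        rw [Walk.isPath_copy]; exact hsegP0
      have hsegsup : ∀ z ∈ seg.support, ∃ t, ms ≤ t ∧ t ≤ i ∧ z = r t := by
        intro z hz
        rw [Walk.support_copy] at hz
        obtain ⟨t, ht1, ht2, ht3⟩ := hsegsup0 z hz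
        exact ⟨t, ht1, by omega, ht3⟩
      let inner : G.Walk (r ms) (r j) := seg.append J
      have hinnerP : inner.IsPath := by
        refine RayProof.isPath_append hsegP hJP ?_
        intro z hz1 hz2
        obtain ⟨t, ht1, ht2, ht3⟩ := hsegsup z hz1
        rcases hJr z hz2 (ht3 ▸ Set.mem_range_self t) with h | h
        · exact h
        · exfalso
          rw [ht3] at h
          have := hrinj h
          omega
      let Wk' : G.Walk v0 (r j) := Wk.append inner
      have hWk'P : Wk'.IsPath := by
        refine RayProof.isPath_append hWkP hinnerP ?_
        intro z hz1 hz2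
        rw [Walk.mem_support_append_iff] at hz2
        rcases hz2 with h | h
        · obtain ⟨t, ht1, ht2, ht3⟩ := hsegsup z h
          subst ht3
          have : ¬ (ms < t) := fun hgt => hWkInv t hgt hz1
          have : t = ms := by omega
          rw [this]
        · exact absurd (hWkF z hz1) (hJF z h)
      refine ⟨j, Wk', insert u' CU, hWk'P, ?_, ?_, ?_, ⟨inner, rfl⟩, ?_⟩
      · intro k hk hmem
        rw [Walk.mem_support_append_iff] at hmem
        rcases hmem with h | h
        · exact hWkInv k (by omega) h
        · rw [Walk.mem_support_append_iff] at h
          rcases h with h | h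
          · obtain ⟨t, ht1, ht2, ht3⟩ := hsegsup _ h
            have := hrinj ht3
            omega
          · rcases hJr _ h (Set.mem_range_self k) with h' | h'
            · have := hrinj h'; omega
            · have := hrinj h'; omega
      · intro z hz
        rw [Finset.coe_insert] at hz
        rcases hz with rfl | hz
        · refine ⟨hu'U, ?_⟩
          show z ∈ Wk'.support
          rw [Walk.mem_support_append_iff, Walk.mem_support_append_iff]
          exact Or.inr (Or.inr hu'J)
        · obtain ⟨h1, h2⟩ := hCU hz
          refine ⟨h1, ?_⟩
          show z ∈ Wk'.support
          rw [Walk.mem_support_append_iff]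
          exact Or.inl h2
      · rw [Finset.card_insert_of_notMem]
        intro hmem
        have := (hCU hmem).2
        exact hJF u' hu'J (hWkF u' this)
      · show Wk.length < Wk'.length
        have h1 : Wk'.length = Wk.length + inner.length := Walk.length_append _ _
        have h2 : inner.length = seg.length + J.length := Walk.length_append _ _
        have h3 : J.length ≠ 0 := by
          intro h0
          have := J.eq_of_length_eq_zero h0
          have := hrinj this
          omega
        omega
    obtain ⟨i, j, J, hij, hJP, hJF, hJr, hJu⟩ :=
      RayProof.jump_lemma hconn hlf h2c U v0 r I hrdist hIU hIinf hteeth hUr F hFfin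
    rcases lt_or_gt_of_ne hij with h | h
    · exact build i j J h hJP hJF hJr hJu
    · refine build j i J.reverse h hJP.reverse ?_ ?_ ?_
      · intro z hz
        rw [Walk.support_reverse, List.mem_reverse] at hz
        exact hJF z hz
      · intro z hz hzr
        rw [Walk.support_reverse, List.mem_reverse] at hz
        rcases hJr z hz hzr with h' | h'
        · exact Or.inr h'
        · exact Or.inl h'
      · obtain ⟨w', h1, h2, h3⟩ := hJu
        refine ⟨w', ?_, h2, h3⟩
        rwa [Walk.support_reverse, List.mem_reverse]
  -- base walk
  have hr0 : v0 = r 0 := hconn.dist_eq_zero_iff.mp (hrdist 0)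
  have base : ∃ (Wk : G.Walk v0 (r 0)), Wk.IsPath ∧ (∀ k, 0 < k → r k ∉ Wk.support) := by
    refine ⟨(Walk.nil : G.Walk v0 v0).copy rfl hr0, ?_, ?_⟩
    · rw [Walk.isPath_copy]; exact Walk.IsPath.nil
    · intro k hk hmem
      rw [Walk.support_copy, Walk.support_nil] at hmem
      have h1 : r k = v0 := List.mem_singleton.mp hmem
      have h2 : r k = r 0 := h1.trans hr0
      have := hrinj h2
      omega
  obtain ⟨Wk0, hWk0P, hWk0Inv⟩ := base
  have hCU0 : ((∅ : Finset α) : Set α) ⊆ U ∩ {z | z ∈ Wk0.support} := by simp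
  let Pack := Σ' (ms : ℕ) (Wk : G.Walk v0 (r ms)) (CU : Finset α),
      Wk.IsPath ∧ (∀ k, ms < k → r k ∉ Wk.support) ∧ (↑CU ⊆ U ∩ {z | z ∈ Wk.support})
  let step := fun (p : Pack) => hstep p.1 p.2.1 p.2.2.1 p.2.2.2.1 p.2.2.2.2.1 p.2.2.2.2.2
  let f : ℕ → Pack :=
    fun n => Nat.rec (⟨0, Wk0, ∅, hWk0P, hWk0Inv, hCU0⟩ : Pack)
      (fun _ p =>
        ⟨(step p).choose, (step p).choose_spec.choose, (step p).choose_spec.choose_spec.choose,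
         (step p).choose_spec.choose_spec.choose_spec.1,
         (step p).choose_spec.choose_spec.choose_spec.2.1,
         (step p).choose_spec.choose_spec.choose_spec.2.2.1⟩) n
  have hD : ∀ n, (f (n + 1)).2.2.1.card = (f n).2.2.1.card + 1 :=
    fun n => (step (f n)).choose_spec.choose_spec.choose_spec.2.2.2.1
  have hE : ∀ n, ∃ ext : G.Walk (r (f n).1) (r (f (n + 1)).1),
      (f (n + 1)).2.1 = (f n).2.1.append ext :=
    fun n => (step (f n)).choose_spec.choose_spec.choose_spec.2.2.2.2.1
  have hL : ∀ n, (f n).2.1.length < (f (n + 1)).2.1.length :=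
    fun n => (step (f n)).choose_spec.choose_spec.choose_spec.2.2.2.2.2
  have hcard : ∀ n, (f n).2.2.1.card = n := by
    intro n
    induction n with
    | zero => rfl
    | succ n ih => rw [hD n, ih]
  have hlenmono : ∀ n, n ≤ (f n).2.1.length := by
    intro n
    induction n with
    | zero => omega
    | succ n ih => have := hL n; omega
  have hlenle : ∀ {n n' : ℕ}, n ≤ n' → (f n).2.1.length ≤ (f n').2.1.length := by
    intro n n' h
    induction n', h using Nat.le_induction with
    | base => exact le_rfl
    | succ n' hn ih => exact ih.trans (hL n').le
  have agree : ∀ n k, k ≤ (f n).2.1.length →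
      (f (n + 1)).2.1.getVert k = (f n).2.1.getVert k := by
    intro n k hk
    obtain ⟨ext, hx⟩ := hE n
    rw [hx, Walk.getVert_append]
    by_cases h : k < (f n).2.1.length
    · rw [if_pos h]
    · have hkk : k = (f n).2.1.length := by omega
      rw [if_neg h, hkk, Nat.sub_self, Walk.getVert_zero, Walk.getVert_length]
  have agree' : ∀ n n' k, n ≤ n' → k ≤ (f n).2.1.length →
      (f n').2.1.getVert k = (f n).2.1.getVert k := by
    intro n n' k h hk
    induction n', h using Nat.le_induction with
    | base => rfl
    | succ n' hn ih => rw [agree n' k (hk.trans (hlenle hn)), ih]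
  set ρ : ℕ → α := fun k => (f k).2.1.getVert k with hρ
  have key : ∀ a b, a ≤ b → ρ a = ρ b → a = b := by
    intro a b h heq
    have h1 : (f b).2.1.getVert a = ρ a := agree' a b a h (hlenmono a)
    refine RayProof.getVert_inj_of_isPath _ (f b).2.2.2.1 a b
      ((hlenmono a).trans (hlenle h)) (hlenmono b) ?_
    rw [h1, heq]
  have hinjρ : Function.Injective ρ := by
    intro a b hab
    rcases le_total a b with h | h
    · exact key a b h hab
    · exact (key b a h hab.symm).symm
  have hadjρ : ∀ n, G.Adj (ρ n) (ρ (n + 1)) := by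
    intro n
    have h1 : (f (n + 1)).2.1.getVert n = ρ n :=
      agree' n (n + 1) n (Nat.le_succ n) (hlenmono n)
    have h2 := Walk.adj_getVert_succ (f (n + 1)).2.1
      (i := n) (lt_of_lt_of_le (Nat.lt_succ_self n) (hlenmono (n + 1)))
    rw [h1] at h2
    exact h2
  have hsubρ : ∀ n, ((f n).2.2.1 : Set α) ⊆ U ∩ Set.range ρ := by
    intro n z hz
    obtain ⟨hzU, hzsup⟩ := (f n).2.2.2.2.2 hz
    refine ⟨hzU, ?_⟩
    have hzsup' : z ∈ (f n).2.1.support := hzsup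
    rw [Walk.mem_support_iff_exists_getVert] at hzsup'
    obtain ⟨k, hk1, hk2⟩ := hzsup'
    rcases le_total k n with h | h
    · refine ⟨k, ?_⟩
      show (f k).2.1.getVert k = z
      rw [← agree' k n k h (hlenmono k)]
      exact hk1
    · refine ⟨k, ?_⟩
      show (f k).2.1.getVert k = z
      rw [agree' n k k h hk2]
      exact hk1
  refine ⟨ρ, ⟨hinjρ, hadjρ⟩, ?_⟩
  by_contra hinf
  rw [Set.not_infinite] at hinf
  have hsub2 : (f (hinf.toFinset.card + 1)).2.2.1 ⊆ hinf.toFinset := by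
    intro z hz
    rw [Set.Finite.mem_toFinset]
    exact hsubρ (hinf.toFinset.card + 1) (Finset.mem_coe.mpr hz)
  have h1 := Finset.card_le_card hsub2
  rw [hcard (hinf.toFinset.card + 1)] at h1
  omega

end RayProof


/-- Let `G` be a countable, 2-connected, locally finite graph and `U ⊆ V(G)`
infinite. Then `G` has a ray containing an infinite subset of `U`. -/
theorem ray_through_infinitely_many {α : Type} [Countable α] (G : SimpleGraph α)
    (h2 : TwoConnected G) (hlf : ∀ v : α, (G.neighborSet v).Finite)
    (U : Set α) (hU : U.Infinite) :
    ∃ r : ℕ → α, IsRay G r ∧ (U ∩ Set.range r).Infinite := by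
  classical
  obtain ⟨hconn, -, h2c⟩ := h2
  obtain ⟨r, hr, hinf⟩ := RayProof.ray_through_infinitely_many' G hconn h2c hlf U hU
  exact ⟨r, ⟨hr.1, hr.2⟩, hinf⟩
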